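/- Let ρ_n, ρ_s, α, c > 0 and u_n, u_s ∈ ℝ satisfy u_s² < (α/2)ρ_s and P(0) > 0, where P(λ) = ((λ - u_n)² - cρ_n^{2/3} - 2αρ_n)((λ - u_s)² - (α/2)ρ_s) - α²ρ_nρ_s. Then the symmetric 4×4 matrix H with rows (cρ_n^{-1/3} + 2α, α, u_n, 0), (α, α/2, 0, u_s), (u_n, 0, ρ_n, 0), (0, u_s, 0, ρ_s) is positive definite. -/

import Mathlib

set_option maxHeartbeats 1000000 in
theorem stmt_13 (ρ_n ρ_s α c u_n u_s : ℝ) (hρn : 0 < ρ_n) (hρs : 0 < ρ_s)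
    (hα : 0 < α) (hc : 0 < c)
    (P : ℝ → ℝ)
    (hP : ∀ l, P l = ((l - u_n) ^ 2 - c * ρ_n ^ ((2 : ℝ) / 3) - 2 * α * ρ_n) *
        ((l - u_s) ^ 2 - α / 2 * ρ_s) - α ^ 2 * ρ_n * ρ_s)
    (hus : u_s ^ 2 < α / 2 * ρ_s) (hP0 : 0 < P 0)
    (H : Matrix (Fin 4) (Fin 4) ℝ)
    (hH : H = !![c * ρ_n ^ (-(1 : ℝ) / 3) + 2 * α, α, u_n, 0;
                 α, α / 2, 0, u_s;
                 u_n, 0, ρ_n, 0;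
                 0, u_s, 0, ρ_s]) :
    H.PosDef := by
  have h23 : ρ_n ^ ((2 : ℝ) / 3) = ρ_n ^ (-(1 : ℝ) / 3) * ρ_n ^ (1 : ℝ) := by
    rw [← Real.rpow_add hρn]; norm_num
  rw [Real.rpow_one] at h23
  set k : ℝ := ρ_n ^ (-(1 : ℝ) / 3) with hkdef
  have hk : 0 < k := Real.rpow_pos_of_pos hρn _
  rw [hP 0, h23] at hP0
  have hB : 0 < α / 2 * ρ_s - u_s ^ 2 := by linarith
  have hD : 0 < (c * k * ρ_n + 2 * α * ρ_n - u_n ^ 2) * (α / 2 * ρ_s - u_s ^ 2)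
      - α ^ 2 * ρ_n * ρ_s := by nlinarith [hP0]
  rw [Matrix.posDef_iff_dotProduct_mulVec]
  constructor
  · subst hH
    ext i j
    fin_cases i <;> fin_cases j <;> simp [Matrix.conjTranspose_apply]
  · intro x hx
    subst hH
    simp only [Matrix.mulVec, dotProduct, Fin.sum_univ_four, Matrix.cons_val',
      Matrix.cons_val_zero, Matrix.cons_val_one, Matrix.head_cons, Matrix.empty_val',
      Matrix.cons_val_fin_one, Matrix.head_fin_const, RCLike.star_def, Pi.star_apply,
      star_trivial, Matrix.cons_val_two, Matrix.tail_cons, Matrix.cons_val_three,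
      RCLike.re_to_real]
    simp [Matrix.cons_val_zero, Matrix.cons_val_one, Matrix.head_cons, Fin.sum_univ_four]
    by_contra hQ
    push_neg at hQ
    have h1 : x 0 ^ 2 ≤ 0 := by
      nlinarith [sq_nonneg (ρ_n * x 2 + u_n * x 0), sq_nonneg (ρ_s * x 3 + u_s * x 1),
        sq_nonneg (ρ_n * (α / 2 * ρ_s - u_s ^ 2) * x 1 + α * ρ_n * ρ_s * x 0),
        mul_pos (mul_pos hρn hρs) hD, mul_pos (mul_pos (mul_pos hρn hρn) hρs) hB,
        mul_nonneg (mul_nonneg (mul_pos hρs hB).le hρn.le) (sq_nonneg (ρ_n * x 2 + u_n * x 0)),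
        mul_nonneg (mul_nonneg (mul_pos hρn hB).le hρn.le) (sq_nonneg (ρ_s * x 3 + u_s * x 1)),
        mul_nonneg (mul_pos hρs hB).le (sq_nonneg (ρ_n * x 2 + u_n * x 0)),
        mul_nonneg (mul_pos hρn hB).le (sq_nonneg (ρ_s * x 3 + u_s * x 1))]
    have hx0 : x 0 = 0 := by
      have := le_antisymm h1 (sq_nonneg (x 0))
      exact sq_eq_zero_iff.mp this
    rw [hx0] at hQ
    have h2 : x 1 ^ 2 ≤ 0 := by
      nlinarith [sq_nonneg (ρ_s * x 3 + u_s * x 1), hB, hρs,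
        mul_nonneg (mul_pos hρs hρn).le (sq_nonneg (x 2))]
    have hx1 : x 1 = 0 := by
      have := le_antisymm h2 (sq_nonneg (x 1))
      exact sq_eq_zero_iff.mp this
    rw [hx1] at hQ
    have hx2 : x 2 = 0 := by
      have h3 : x 2 ^ 2 ≤ 0 := by
        nlinarith [mul_nonneg hρs.le (sq_nonneg (x 3)), hρn]
      have := le_antisymm h3 (sq_nonneg (x 2))
      exact sq_eq_zero_iff.mp this
    rw [hx2] at hQ
    have hx3 : x 3 = 0 := by
      have h4 : x 3 ^ 2 ≤ 0 := by
        nlinarith [hρs]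
      have := le_antisymm h4 (sq_nonneg (x 3))
      exact sq_eq_zero_iff.mp this
    apply hx
    funext i
    fin_cases i <;> simp [hx0, hx1, hx2, hx3]
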